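/- The Cantor cube X = {0,1}^{ω₁} has no countable point network: there is no assignment x ↦ W(x) of countable families of subsets of X containing x such that for every x in an open set U there is an open V with x ∈ V ⊆ U such that every y ∈ V admits W ∈ W(y) with x ∈ W ⊆ U. -/

import Mathlib

open Topology
universe u

/-- The `<ω₁`-box style topology on `{0,1}^{ω₁}` generated by the sets
`B_α(x) = {y : y γ = x γ for all γ < α}`. -/
noncomputable def cubeTop :
    TopologicalSpace ((Cardinal.aleph.{u} 1).ord.ToType → Bool) :=
  TopologicalSpace.generateFrom
    {S | ∃ (x : (Cardinal.aleph.{u} 1).ord.ToType → Bool)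
          (α : (Cardinal.aleph.{u} 1).ord.ToType),
        S = {y | ∀ γ < α, y γ = x γ}}

namespace Stmt16Aux

open scoped Classical

/-- `ω₁` as a type. -/
abbrev OO : Type u := (Cardinal.aleph.{u} 1).ord.ToType

/-- Points of the cube. -/
abbrev Pt : Type u := OO.{u} → Bool

instance : Nonempty OO.{u} := by
  rw [← Cardinal.mk_ne_zero_iff, Cardinal.mk_ord_toType]
  exact (Cardinal.aleph_pos 1).ne'

/-- Basic box around `x` of width `α`. -/
def Bx (x : Pt.{u}) (α : OO.{u}) : Set Pt.{u} := {y | ∀ γ < α, y γ = x γ}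

theorem Bx_mono {x : Pt.{u}} {α β : OO.{u}} (h : α ≤ β) : Bx x β ⊆ Bx x α :=
  fun _ hy γ hγ => hy γ (lt_of_lt_of_le hγ h)

theorem countable_Iio (i : OO.{u}) : (Set.Iio i).Countable :=
  (Cardinal.countable_iff_lt_aleph_one _).2 (Cardinal.mk_Iio_ord_toType i)

theorem exists_bound {s : Set OO.{u}} (hs : s.Countable) : ∃ b, ∀ x ∈ s, x < b := by
  have h2 : Cardinal.mk s < Order.cof OO.{u} := by
    rw [Ordinal.cof_toType, Cardinal.isRegular_aleph_one.cof_ord]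
    exact (Cardinal.countable_iff_lt_aleph_one s).1 hs
  by_contra hne
  push_neg at hne
  exact absurd (Order.cof_le (s := s) (fun a => by obtain ⟨x, hx, h⟩ := hne a; exact ⟨x, hx, h⟩))
    (not_le.2 h2)

/-- A choice of strict upper bound (meaningful for countable sets). -/
noncomputable def bd (s : Set OO.{u}) : OO.{u} :=
  if h : ∃ b, ∀ x ∈ s, x < b then h.choose else Classical.arbitrary _

theorem bd_spec {s : Set OO.{u}} (hs : s.Countable) : ∀ x ∈ s, x < bd s := by
  have h := exists_bound hs
  rw [bd, dif_pos h]
  exact h.choose_spec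

/-- From any open set containing `x`, extract a basic box around `x` inside it. -/
theorem exists_basic {V : Set Pt.{u}}
    (hV : TopologicalSpace.GenerateOpen
      {S | ∃ (x : Pt.{u}) (α : OO.{u}), S = {y | ∀ γ < α, y γ = x γ}} V) :
    ∀ x ∈ V, ∃ α, Bx x α ⊆ V := by
  induction hV with
  | basic S hS =>
    rintro x hx
    obtain ⟨z, α, rfl⟩ := hS
    exact ⟨α, fun y hy γ hγ => (hy γ hγ).trans (hx γ hγ)⟩
  | univ => exact fun x _ => ⟨Classical.arbitrary _, fun y _ => trivial⟩
  | inter S T _ _ ihS ihT =>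
    rintro x ⟨hxS, hxT⟩
    obtain ⟨α, hα⟩ := ihS x hxS
    obtain ⟨β, hβ⟩ := ihT x hxT
    exact ⟨max α β, fun y hy =>
      ⟨hα (Bx_mono (le_max_left _ _) hy), hβ (Bx_mono (le_max_right _ _) hy)⟩⟩
  | sUnion 𝒮 _ ih =>
    rintro x ⟨T, hT, hxT⟩
    obtain ⟨α, hα⟩ := ih T hT x hxT
    exact ⟨α, fun y hy => ⟨T, hT, hα hy⟩⟩

variable (Γ : Pt.{u} → OO.{u} → OO.{u})

/-- The recursively defined increasing sequence of coordinates. -/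
noncomputable def gam : OO.{u} → OO.{u} :=
  WellFoundedLT.fix fun i g =>
    max (Γ (fun ξ => if ∃ j, ∃ h : j < i, g j h = ξ then true else false)
           (bd {ξ | ∃ j, ∃ h : j < i, g j h = ξ}))
        (bd {ξ | ∃ j, ∃ h : j < i, g j h = ξ})

/-- The set of coordinates used before stage `i`. -/
noncomputable def Sset (i : OO.{u}) : Set OO.{u} := {ξ | ∃ j, ∃ _ : j < i, gam Γ j = ξ}

/-- The point built at stage `i`. -/
noncomputable def Xpt (i : OO.{u}) : Pt.{u} :=
  fun ξ => if ∃ j, ∃ h : j < i, gam Γ j = ξ then true else false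

/-- The bound used at stage `i`. -/
noncomputable def Ab (i : OO.{u}) : OO.{u} := bd (Sset Γ i)

theorem gam_eq (i : OO.{u}) : gam Γ i = max (Γ (Xpt Γ i) (Ab Γ i)) (Ab Γ i) := by
  show WellFoundedLT.fix _ i = _
  rw [WellFoundedLT.fix_eq]
  rfl

theorem Sset_countable (i : OO.{u}) : (Sset Γ i).Countable := by
  have hsub : Sset Γ i ⊆ gam Γ '' Set.Iio i := by
    rintro ξ ⟨j, hj, rfl⟩
    exact ⟨j, hj, rfl⟩
  exact ((countable_Iio i).image _).mono hsub

theorem gam_lt_Ab {j i : OO.{u}} (h : j < i) : gam Γ j < Ab Γ i :=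
  bd_spec (Sset_countable Γ i) _ ⟨j, h, rfl⟩

theorem Ab_le_gam (i : OO.{u}) : Ab Γ i ≤ gam Γ i := by
  rw [gam_eq]; exact le_max_right _ _

theorem Gamma_le_gam (i : OO.{u}) : Γ (Xpt Γ i) (Ab Γ i) ≤ gam Γ i := by
  rw [gam_eq]; exact le_max_left _ _

theorem gam_strictMono : StrictMono (gam Γ) :=
  fun j i h => (gam_lt_Ab Γ h).trans_le (Ab_le_gam Γ i)

/-- The limit point. -/
noncomputable def Ypt : Pt.{u} := fun ξ => if ∃ j, gam Γ j = ξ then true else false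

theorem Ypt_agree {i ξ : OO.{u}} (h : ξ < gam Γ i) : Ypt Γ ξ = Xpt Γ i ξ := by
  have hiff : (∃ j, gam Γ j = ξ) ↔ (∃ j, ∃ _ : j < i, gam Γ j = ξ) := by
    constructor
    · rintro ⟨j, rfl⟩
      refine ⟨j, ?_, rfl⟩
      by_contra hji
      exact absurd h (not_lt.2 ((gam_strictMono Γ).monotone (not_lt.1 hji)))
    · rintro ⟨j, _, rfl⟩
      exact ⟨j, rfl⟩
  unfold Ypt Xpt
  by_cases hc : ∃ j, ∃ _ : j < i, gam Γ j = ξ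
  · rw [if_pos (hiff.2 hc), if_pos hc]
  · rw [if_neg (fun hh => hc (hiff.1 hh)), if_neg hc]

theorem Xpt_self_false (i : OO.{u}) : Xpt Γ i (gam Γ i) = false := by
  have hc : ¬ ∃ j, ∃ _ : j < i, gam Γ j = gam Γ i := by
    rintro ⟨j, hj, e⟩
    exact (gam_strictMono Γ hj).ne e
  unfold Xpt
  rw [if_neg hc]

theorem Xpt_later_true {i j : OO.{u}} (h : i < j) : Xpt Γ j (gam Γ i) = true := by
  unfold Xpt
  rw [if_pos ⟨i, h, rfl⟩]

end Stmt16Aux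

/-- The Cantor cube `{0,1}^{ω₁}` (with the topology generated by the sets
`B_α(x)`) has no countable point network. -/
theorem stmt16 :
    ¬ ∃ 𝒲 : ((Cardinal.aleph.{u} 1).ord.ToType → Bool) →
        Set (Set ((Cardinal.aleph.{u} 1).ord.ToType → Bool)),
      (∀ x, (𝒲 x).Countable) ∧ (∀ x, ∀ S ∈ 𝒲 x, x ∈ S) ∧
      (∀ x U, IsOpen[cubeTop] U → x ∈ U →
        ∃ V, IsOpen[cubeTop] V ∧ x ∈ V ∧ V ⊆ U ∧
          ∀ y ∈ V, ∃ W ∈ 𝒲 y, x ∈ W ∧ W ⊆ U) := by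
  classical
  rintro ⟨𝒲, hcnt, -, hnet⟩
  -- Extract, for every point `x` and width `α`, a width `β` such that every `y`
  -- agreeing with `x` below `β` has a witness `W ∈ 𝒲 y` with `x ∈ W ⊆ Bx x α`.
  have key : ∀ (x : Stmt16Aux.Pt.{u}) (α : Stmt16Aux.OO.{u}), ∃ β : Stmt16Aux.OO.{u},
      ∀ y : Stmt16Aux.Pt.{u}, (∀ γ < β, y γ = x γ) →
        ∃ W ∈ 𝒲 y, x ∈ W ∧ W ⊆ Stmt16Aux.Bx x α := by
    intro x α
    have hBopen : IsOpen[cubeTop.{u}] (Stmt16Aux.Bx x α) :=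
      TopologicalSpace.GenerateOpen.basic _ ⟨x, α, rfl⟩
    obtain ⟨V, hVopen, hxV, _, hWit⟩ := hnet x (Stmt16Aux.Bx x α) hBopen (fun γ _ => rfl)
    obtain ⟨β, hβ⟩ := Stmt16Aux.exists_basic hVopen x hxV
    exact ⟨β, fun y hy => hWit y (hβ hy)⟩
  choose Γ hΓ using key
  -- For each stage `i`, a witness `W i ∈ 𝒲 (Ypt Γ)` with
  -- `Xpt Γ i ∈ W i ⊆ Bx (Xpt Γ i) (Ab Γ i)`.
  have hWex : ∀ i : Stmt16Aux.OO.{u}, ∃ W ∈ 𝒲 (Stmt16Aux.Ypt Γ),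
      Stmt16Aux.Xpt Γ i ∈ W ∧ W ⊆ Stmt16Aux.Bx (Stmt16Aux.Xpt Γ i) (Stmt16Aux.Ab Γ i) := by
    intro i
    refine hΓ _ _ (Stmt16Aux.Ypt Γ) ?_
    intro ξ hξ
    exact Stmt16Aux.Ypt_agree Γ (hξ.trans_le (Stmt16Aux.Gamma_le_gam Γ i))
  choose W hW1 hW2 hW3 using hWex
  -- The witnesses are pairwise distinct.
  have hne : ∀ {i j : Stmt16Aux.OO.{u}}, i < j → W i ≠ W j := by
    intro i j h hij
    have h1 : Stmt16Aux.Xpt Γ i ∈ Stmt16Aux.Bx (Stmt16Aux.Xpt Γ j) (Stmt16Aux.Ab Γ j) :=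
      hW3 j (hij ▸ hW2 i)
    have h2 := h1 (Stmt16Aux.gam Γ i) (Stmt16Aux.gam_lt_Ab Γ h)
    rw [Stmt16Aux.Xpt_self_false, Stmt16Aux.Xpt_later_true Γ h] at h2
    exact Bool.false_ne_true h2
  have hinj : Function.Injective W := by
    intro i j hij
    by_contra hnij
    rcases Ne.lt_or_gt hnij with h | h
    · exact hne h hij
    · exact hne h hij.symm
  -- Contradiction with countability of `𝒲 (Ypt Γ)`.
  have hrange : Set.range W ⊆ 𝒲 (Stmt16Aux.Ypt Γ) := by
    rintro _ ⟨i, rfl⟩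
    exact hW1 i
  have hc : (Set.range W).Countable := (hcnt _).mono hrange
  have hlt : Cardinal.mk (Set.range W) < Cardinal.aleph.{u} 1 :=
    (Cardinal.countable_iff_lt_aleph_one _).1 hc
  rw [Cardinal.mk_range_eq _ hinj, Cardinal.mk_ord_toType] at hlt
  exact lt_irrefl _ hlt
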